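/- arXiv:2005.08490 — 2 statements merged into one kernel-verified Lean document; each statement's English description precedes it below -/
import Mathlib

section
/- Let ν > 0, u, v ∈ ℂ with |u| < 1, |v| < 1, and w ∈ ℂ. Define K^ν_{u,v}(z;w) = (ν/(π(1-uv))) exp( (ν/(1-uv)) ( -uv(|z|²+|w|²) + u \overline{z} w + v z \overline{w} ) ). Then ∫_ℂ |K^ν_{u,v}(z;w)|² e^{-ν|z|²} dλ(z) = K^ν_{|u|²,|v|²}(w;w), which is a positive real number. -/
open MeasureTheory ComplexConjugate
open scoped ENNReal NNReal Real

noncomputable def Kker (ν : ℝ) (u v z w : ℂ) : ℂ :=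
  ((ν : ℂ) / (Real.pi * (1 - u * v))) *
    Complex.exp (((ν : ℂ) / (1 - u * v)) *
      (-(u * v) * (((‖z‖ : ℝ) : ℂ) ^ 2 + ((‖w‖ : ℝ) : ℂ) ^ 2)
        + u * conj z * w + v * z * conj w))

noncomputable def gaussMeasure (ν : ℝ) : Measure ℂ :=
  volume.withDensity fun z => ENNReal.ofReal (Real.exp (-ν * ‖z‖ ^ 2))

lemma gauss1d (a b : ℝ) (ha : 0 < a) :
    ∫ x : ℝ, Real.exp (-(a * x ^ 2) + b * x)
      = Real.sqrt (π / a) * Real.exp (b ^ 2 / (4 * a)) := by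
  have h : (fun x : ℝ => Real.exp (-(a * x ^ 2) + b * x))
      = fun x => Real.exp (-a * (x - b / (2 * a)) ^ 2) * Real.exp (b ^ 2 / (4 * a)) := by
    funext x; rw [← Real.exp_add]; congr 1; field_simp; ring
  rw [h, integral_mul_const, integral_sub_right_eq_self (fun x => Real.exp (-a * x ^ 2)) (b/(2*a)),
    integral_gaussian]

lemma gauss2d (a c1 c2 : ℝ) (ha : 0 < a) :
    ∫ z : ℂ, Real.exp (-(a * ‖z‖ ^ 2) + (c1 * z.re + c2 * z.im))
      = π / a * Real.exp ((c1 ^ 2 + c2 ^ 2) / (4 * a)) := by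
  rw [← (Complex.volume_preserving_equiv_real_prod.symm).integral_comp
      Complex.measurableEquivRealProd.symm.measurableEmbedding]
  have h : ∀ p : ℝ × ℝ,
      Real.exp (-(a * ‖Complex.measurableEquivRealProd.symm p‖ ^ 2)
        + (c1 * (Complex.measurableEquivRealProd.symm p).re + c2 * (Complex.measurableEquivRealProd.symm p).im))
      = Real.exp (-(a * p.1 ^ 2) + c1 * p.1) * Real.exp (-(a * p.2 ^ 2) + c2 * p.2) := by
    intro p
    have hre : (Complex.measurableEquivRealProd.symm p).re = p.1 := rfl
    have him : (Complex.measurableEquivRealProd.symm p).im = p.2 := rfl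
    rw [← Real.exp_add, Complex.sq_norm, Complex.normSq_apply, hre, him]; ring_nf
  simp_rw [h]
  rw [show (volume : Measure (ℝ × ℝ)) = volume.prod volume from rfl,
    integral_prod_mul (fun x => Real.exp (-(a*x^2)+c1*x)) (fun y => Real.exp (-(a*y^2)+c2*y)),
    gauss1d a c1 ha, gauss1d a c2 ha,
    show (c1^2+c2^2)/(4*a) = c1^2/(4*a) + c2^2/(4*a) by ring, Real.exp_add]
  have h2 : Real.sqrt (π/a) * Real.sqrt (π/a) = π/a := Real.mul_self_sqrt (by positivity)
  linear_combination Real.exp (c1^2/(4*a)) * Real.exp (c2^2/(4*a)) * h2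

lemma gauss_int (ν : ℝ) (g : ℂ → ℝ) :
    ∫ z, g z ∂gaussMeasure ν = ∫ z, Real.exp (-ν * ‖z‖ ^ 2) * g z := by
  have hmeas : Measurable fun z : ℂ => (Real.exp (-ν * ‖z‖ ^ 2)).toNNReal := by
    apply Measurable.real_toNNReal
    exact (Real.continuous_exp.comp ((continuous_const.mul (continuous_norm.pow 2)))).measurable
  have h : gaussMeasure ν = volume.withDensity
      (fun z : ℂ => ((Real.exp (-ν * ‖z‖ ^ 2)).toNNReal : ℝ≥0∞)) := rfl
  rw [h, integral_withDensity_eq_integral_smul hmeas]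
  congr 1; funext z
  rw [NNReal.smul_def, smul_eq_mul, Real.coe_toNNReal _ (Real.exp_pos _).le]

lemma exp_ident (s ν : ℝ) (u v w z : ℂ) (hν : ν = s * Complex.normSq (1 - u*v)) :
    2 * (((s:ℂ) * conj (1-u*v)) * (-(u*v) * (((‖z‖ : ℝ):ℂ)^2 + ((‖w‖ : ℝ):ℂ)^2)
        + u * conj z * w + v * z * conj w)).re - ν * ‖z‖ ^ 2
      = 2 * (((s:ℂ) * conj (1-u*v)) * (-(u*v) * (((‖w‖ : ℝ):ℂ)^2))).re
        + (-((s * (1 - Complex.normSq u * Complex.normSq v)) * ‖z‖ ^ 2)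
          + (2 * (((s:ℂ)*conj (1-u*v)) * u * w + conj (((s:ℂ)*conj (1-u*v)) * v * conj w))).re * z.re
          + (2 * (((s:ℂ)*conj (1-u*v)) * u * w + conj (((s:ℂ)*conj (1-u*v)) * v * conj w))).im * z.im) := by
  subst hν
  simp only [← Complex.ofReal_pow, Complex.sq_norm, Complex.normSq_apply,
    Complex.mul_re, Complex.mul_im, Complex.add_re, Complex.add_im, Complex.neg_re, Complex.neg_im,
    Complex.sub_re, Complex.sub_im, Complex.one_re, Complex.one_im, Complex.conj_re, Complex.conj_im,
    Complex.ofReal_re, Complex.ofReal_im, Complex.re_ofNat, Complex.im_ofNat]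
  ring

lemma exp_ident2 (s ν : ℝ) (u v w : ℂ) (hν : ν = s * Complex.normSq (1-u*v))
    (hs : s ≠ 0) (h1 : 1 - Complex.normSq u * Complex.normSq v ≠ 0) :
    2 * (((s:ℂ) * conj (1-u*v)) * (-(u*v) * (((‖w‖ : ℝ):ℂ)^2))).re
      + ((2 * (((s:ℂ)*conj (1-u*v)) * u * w + conj (((s:ℂ)*conj (1-u*v)) * v * conj w))).re ^ 2
        + (2 * (((s:ℂ)*conj (1-u*v)) * u * w + conj (((s:ℂ)*conj (1-u*v)) * v * conj w))).im ^ 2)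
          / (4 * (s * (1 - Complex.normSq u * Complex.normSq v)))
    = ν / (1 - Complex.normSq u * Complex.normSq v) *
        (-(Complex.normSq u * Complex.normSq v) * (‖w‖ ^ 2 + ‖w‖ ^ 2)
          + Complex.normSq u * ‖w‖ ^ 2 + Complex.normSq v * ‖w‖ ^ 2) := by
  subst hν
  field_simp
  simp only [← Complex.ofReal_pow, Complex.sq_norm, Complex.normSq_apply,
    Complex.mul_re, Complex.mul_im, Complex.add_re, Complex.add_im, Complex.neg_re, Complex.neg_im,
    Complex.sub_re, Complex.sub_im, Complex.one_re, Complex.one_im, Complex.conj_re, Complex.conj_im,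
    Complex.ofReal_re, Complex.ofReal_im, Complex.re_ofNat, Complex.im_ofNat]
  ring

theorem stmt7 (ν : ℝ) (hν : 0 < ν) (u v w : ℂ)
    (hu : ‖u‖ < 1) (hv : ‖v‖ < 1) :
    ((∫ z, ‖Kker ν u v z w‖ ^ 2 ∂gaussMeasure ν : ℝ) : ℂ) =
      Kker ν (((‖u‖ : ℝ) : ℂ) ^ 2) (((‖v‖ : ℝ) : ℂ) ^ 2) w w ∧
    0 < ∫ z, ‖Kker ν u v z w‖ ^ 2 ∂gaussMeasure ν := by
  have hπ := Real.pi_pos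
  have hu2 : Complex.normSq u < 1 := by
    rw [← Complex.sq_norm]; nlinarith [norm_nonneg u]
  have hv2 : Complex.normSq v < 1 := by
    rw [← Complex.sq_norm]; nlinarith [norm_nonneg v]
  have h1ab : (0:ℝ) < 1 - Complex.normSq u * Complex.normSq v := by
    nlinarith [Complex.normSq_nonneg u, Complex.normSq_nonneg v]
  have hD0 : (1 : ℂ) - u * v ≠ 0 := by
    intro h
    have huv : (1 : ℂ) = u * v := sub_eq_zero.mp h
    have := congrArg Complex.normSq huv
    rw [Complex.normSq_mul] at this
    simp only [Complex.normSq_one] at this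
    nlinarith
  have hm2 : 0 < Complex.normSq (1 - u*v) := Complex.normSq_pos.mpr hD0
  set s := ν / Complex.normSq (1 - u*v) with hs
  have hspos : 0 < s := div_pos hν hm2
  have hνs : ν = s * Complex.normSq (1 - u*v) := by rw [hs]; field_simp
  have hαpos : 0 < s * (1 - Complex.normSq u * Complex.normSq v) := mul_pos hspos h1ab
  have hpval : (ν:ℂ)/(1 - u*v) = (s:ℂ) * conj (1 - u*v) := by
    rw [div_eq_iff hD0, hνs]
    push_cast
    rw [mul_assoc, mul_comm (conj (1 - u*v)) (1 - u*v), Complex.mul_conj]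
  have habs2 : ‖(ν:ℂ)/((Real.pi:ℝ) * (1-u*v) : ℂ)‖^2
      = ν^2/(Real.pi^2 * Complex.normSq (1-u*v)) := by
    rw [Complex.sq_norm, map_div₀ Complex.normSq, map_mul Complex.normSq]
    simp only [Complex.normSq_ofReal]
    ring
  -- abbreviations (as plain function values)
  set cc : ℂ := 2 * (((s:ℂ)*conj (1-u*v)) * u * w + conj (((s:ℂ)*conj (1-u*v)) * v * conj w)) with hcc
  set Ew : ℝ := 2 * (((s:ℂ) * conj (1-u*v)) * (-(u*v) * (((‖w‖ : ℝ):ℂ)^2))).re with hEw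
  -- pointwise identity
  have hpt : ∀ z : ℂ, Real.exp (-ν * ‖z‖ ^ 2) * ‖Kker ν u v z w‖ ^ 2
      = (ν^2/(Real.pi^2 * Complex.normSq (1-u*v)) * Real.exp Ew)
        * Real.exp (-((s * (1 - Complex.normSq u * Complex.normSq v)) * ‖z‖ ^ 2)
            + (cc.re * z.re + cc.im * z.im)) := by
    intro z
    have exp_sq : ∀ x : ℝ, Real.exp x ^ 2 = Real.exp (2 * x) := by
      intro x; rw [pow_two, ← Real.exp_add, two_mul]
    rw [Kker, hpval, norm_mul, Complex.norm_exp, mul_pow, habs2, exp_sq,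
      mul_left_comm, ← Real.exp_add,
      mul_assoc (ν ^ 2 / (Real.pi ^ 2 * Complex.normSq (1 - u * v))), ← Real.exp_add]
    have h := exp_ident s ν u v w z hνs
    rw [hEw, hcc]
    congr 2
    linarith [h]
  have hint : (∫ z, ‖Kker ν u v z w‖ ^ 2 ∂gaussMeasure ν)
      = (ν^2/(Real.pi^2 * Complex.normSq (1-u*v)) * Real.exp Ew)
        * (π / (s * (1 - Complex.normSq u * Complex.normSq v))
          * Real.exp ((cc.re^2 + cc.im^2) / (4 * (s * (1 - Complex.normSq u * Complex.normSq v))))) := by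
    rw [gauss_int]
    simp_rw [hpt]
    rw [integral_const_mul, gauss2d _ cc.re cc.im hαpos]
  set T : ℝ := ν / (Real.pi * (1 - Complex.normSq u * Complex.normSq v)) *
      Real.exp (ν / (1 - Complex.normSq u * Complex.normSq v) *
        (-(Complex.normSq u * Complex.normSq v) * (‖w‖ ^ 2 + ‖w‖ ^ 2)
          + Complex.normSq u * ‖w‖ ^ 2 + Complex.normSq v * ‖w‖ ^ 2)) with hT
  have hfin : (ν^2/(Real.pi^2 * Complex.normSq (1-u*v)) * Real.exp Ew)
        * (π / (s * (1 - Complex.normSq u * Complex.normSq v))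
          * Real.exp ((cc.re^2 + cc.im^2) / (4 * (s * (1 - Complex.normSq u * Complex.normSq v))))) = T := by
    have h2 := exp_ident2 s ν u v w hνs (ne_of_gt hspos) (ne_of_gt h1ab)
    rw [hT, ← h2, Real.exp_add, hEw, hcc]
    have hpre : ν^2/(Real.pi^2 * Complex.normSq (1-u*v))
        * (π / (s * (1 - Complex.normSq u * Complex.normSq v)))
        = ν / (Real.pi * (1 - Complex.normSq u * Complex.normSq v)) := by
      rw [hνs]
      field_simp
    linear_combination (Real.exp (2 * (((s:ℂ) * conj (1-u*v)) * (-(u*v) * (((‖w‖ : ℝ):ℂ)^2))).re)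
      * Real.exp (((2 * (((s:ℂ)*conj (1-u*v)) * u * w + conj (((s:ℂ)*conj (1-u*v)) * v * conj w))).re ^ 2
        + (2 * (((s:ℂ)*conj (1-u*v)) * u * w + conj (((s:ℂ)*conj (1-u*v)) * v * conj w))).im ^ 2)
          / (4 * (s * (1 - Complex.normSq u * Complex.normSq v))))) * hpre
  have hTpos : 0 < T := by
    rw [hT]
    exact mul_pos (div_pos hν (mul_pos hπ h1ab)) (Real.exp_pos _)
  have hcastu : ((‖u‖ : ℝ):ℂ)^2 = ((Complex.normSq u : ℝ) : ℂ) := by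
    rw [← Complex.ofReal_pow, Complex.sq_norm]
  have hcastv : ((‖v‖ : ℝ):ℂ)^2 = ((Complex.normSq v : ℝ) : ℂ) := by
    rw [← Complex.ofReal_pow, Complex.sq_norm]
  have hw1 : conj w * w = ((‖w‖:ℝ):ℂ)^2 := by
    rw [mul_comm, Complex.mul_conj, ← Complex.ofReal_pow, Complex.sq_norm]
  have hw2 : w * conj w = ((‖w‖:ℝ):ℂ)^2 := by
    rw [Complex.mul_conj, ← Complex.ofReal_pow, Complex.sq_norm]
  have hRHS : Kker ν (((‖u‖ : ℝ) : ℂ) ^ 2) (((‖v‖ : ℝ) : ℂ) ^ 2) w w = ((T:ℝ):ℂ) := by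
    rw [Kker, hcastu, hcastv, hT, Complex.ofReal_mul, Complex.ofReal_exp]
    congr 1
    · push_cast; ring
    · congr 1
      push_cast
      linear_combination ((ν:ℂ) / (1 - (Complex.normSq u:ℂ) * (Complex.normSq v:ℂ)) * (Complex.normSq u:ℂ)) * hw1
        + ((ν:ℂ) / (1 - (Complex.normSq u:ℂ) * (Complex.normSq v:ℂ)) * (Complex.normSq v:ℂ)) * hw2
  refine ⟨?_, ?_⟩
  · rw [hint, hfin, hRHS]
  · rw [hint, hfin]; exact hTpos
end

section
/- For |t| < 1 and real x, y, the Mehler formula holds: ∑_{n=0}^∞ t^n H_n(x) H_n(y) / (2^n n!) = (1 - t²)^{-1/2} exp( ( -t²(x² + y²) + 2 t x y ) / (1 - t²) ), where H_n is the n-th physicists' Hermite polynomial. -/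
noncomputable def physHermite (n : ℕ) (x : ℝ) : ℝ :=
  (-1 : ℝ) ^ n * Real.exp (x ^ 2) * iteratedDeriv n (fun y => Real.exp (-y ^ 2)) x

open MeasureTheory Complex
open scoped ENNReal NNReal

noncomputable def G (n : ℕ) (x : ℝ) : ℂ :=
  ∫ s : ℝ, (2 * I * s) ^ n * Complex.exp (-(s:ℂ) ^ 2 + 2 * I * s * x)

lemma cpow_half (a : ℝ) (ha : 0 ≤ a) : (a : ℂ) ^ (1/2 : ℂ) = (Real.sqrt a : ℂ) := by
  rw [show (1/2 : ℂ) = ((1/2 : ℝ) : ℂ) by push_cast; ring, ← Complex.ofReal_cpow ha,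
    Real.sqrt_eq_rpow]

lemma normA (s : ℝ) : ‖2 * I * (s:ℂ)‖ = 2 * |s| := by
  simp only [norm_mul]
  rw [Complex.norm_two, Complex.norm_I, Complex.norm_real, Real.norm_eq_abs]
  ring

lemma normE (s w : ℝ) : ‖Complex.exp (-(s:ℂ) ^ 2 + 2 * I * s * w)‖ = Real.exp (-s ^ 2) := by
  rw [Complex.norm_exp]
  congr 1
  simp [← Complex.ofReal_pow]

lemma Gnorm (n : ℕ) (x : ℝ) (s : ℝ) :
    ‖(2 * I * s) ^ n * Complex.exp (-(s:ℂ) ^ 2 + 2 * I * s * x)‖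
      = (2 * |s|) ^ n * Real.exp (-s ^ 2) := by
  rw [norm_mul, norm_pow, normA, normE]

lemma intM (n : ℕ) : Integrable (fun s : ℝ => (2 * |s|) ^ n * Real.exp (-s ^ 2)) := by
  have h : Integrable (fun s : ℝ =>
      (2 ^ n * n.factorial * Real.exp (1/2)) * Real.exp (-(1/2 : ℝ) * s ^ 2)) :=
    (integrable_exp_neg_mul_sq (by norm_num : (0:ℝ) < 1/2)).const_mul _
  refine h.mono' (Continuous.aestronglyMeasurable (by continuity)) (Filter.Eventually.of_forall fun s => ?_)
  have h1 : |s| ^ n ≤ n.factorial * Real.exp |s| := by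
    have := Real.pow_div_factorial_le_exp |s| (abs_nonneg s) n
    rw [div_le_iff₀ (by positivity)] at this
    linarith [this]
  have h2 : Real.exp |s| * Real.exp (-s ^ 2) ≤ Real.exp (1/2) * Real.exp (-(1/2:ℝ) * s ^ 2) := by
    rw [← Real.exp_add, ← Real.exp_add]
    apply Real.exp_le_exp.2
    nlinarith [sq_nonneg (|s| - 1), _root_.sq_abs s]
  have h0 : ‖(2 * |s|) ^ n * Real.exp (-s ^ 2)‖ = 2 ^ n * (|s| ^ n * Real.exp (-s ^ 2)) := by
    rw [Real.norm_eq_abs, _root_.abs_of_nonneg (by positivity), mul_pow]; ring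
  rw [h0]
  calc 2 ^ n * (|s| ^ n * Real.exp (-s ^ 2))
      ≤ 2 ^ n * ((n.factorial * Real.exp |s|) * Real.exp (-s ^ 2)) := by
        gcongr
    _ ≤ 2 ^ n * (n.factorial * (Real.exp (1/2) * Real.exp (-(1/2:ℝ) * s ^ 2))) := by
        rw [mul_assoc (n.factorial : ℝ)]; gcongr
    _ = 2 ^ n * n.factorial * Real.exp (1/2) * Real.exp (-(1/2:ℝ) * s ^ 2) := by ring

lemma intG (n : ℕ) (x : ℝ) :
    Integrable (fun s : ℝ => (2 * I * s) ^ n * Complex.exp (-(s:ℂ) ^ 2 + 2 * I * s * x)) := by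
  refine ((intM n).mono' (Continuous.aestronglyMeasurable (by continuity))
    (Filter.Eventually.of_forall fun s => ?_))
  rw [Gnorm]

lemma hasDerivAt_ofReal (x : ℝ) : HasDerivAt (fun y : ℝ => (y : ℂ)) 1 x := by
  exact Complex.ofRealCLM.hasDerivAt (x := x)

lemma integrand_hasDerivAt (n : ℕ) (s : ℝ) (x : ℝ) :
    HasDerivAt (fun x : ℝ => (2 * I * s) ^ n * Complex.exp (-(s:ℂ) ^ 2 + 2 * I * s * x))
      ((2 * I * s) ^ (n+1) * Complex.exp (-(s:ℂ) ^ 2 + 2 * I * s * x)) x := by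
  have h := ((((hasDerivAt_ofReal x).const_mul (2 * I * (s:ℂ))).const_add
    (-(s:ℂ) ^ 2)).cexp).const_mul ((2 * I * (s:ℂ)) ^ n)
  refine h.congr_deriv ?_
  rw [pow_succ]; ring

lemma Gderiv (n : ℕ) (x : ℝ) : HasDerivAt (G n) (G (n+1) x) x := by
  refine (hasDerivAt_integral_of_dominated_loc_of_deriv_le (s := Set.univ) (hs := Filter.univ_mem)
    (bound := fun s => (2 * |s|) ^ (n+1) * Real.exp (-s ^ 2))
    (Filter.Eventually.of_forall fun x => Continuous.aestronglyMeasurable (by continuity))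
    (intG n x)
    (Continuous.aestronglyMeasurable (by continuity))
    (Filter.Eventually.of_forall fun s => fun x' _ => le_of_eq (Gnorm (n+1) x' s))
    (intM (n+1))
    (Filter.Eventually.of_forall fun s => fun x' _ => integrand_hasDerivAt n s x')).2

open Real in
lemma Gzero (x : ℝ) : G 0 x = (Real.sqrt π : ℂ) * Complex.exp (-(x:ℂ) ^ 2) := by
  have h : ∀ s : ℝ, (2 * I * (s:ℂ)) ^ 0 * Complex.exp (-(s:ℂ) ^ 2 + 2 * I * s * x)
      = Complex.exp ((-1) * (s:ℂ) ^ 2 + (2 * I * x) * s + 0) := by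
    intro s; rw [pow_zero, one_mul]; ring_nf
  rw [G]
  simp_rw [h]
  rw [integral_cexp_quadratic (by norm_num) (2 * I * x) 0]
  have h2 : ((π : ℂ) / -(-1)) = ((π : ℝ) : ℂ) := by norm_num
  rw [h2, cpow_half π Real.pi_pos.le]
  congr 1
  have : (2 * I * (x:ℂ)) ^ 2 = -4 * (x:ℂ)^2 := by
    rw [mul_pow, mul_pow, Complex.I_sq]; ring
  rw [this]; ring_nf

open Real in
lemma iter_eq (n : ℕ) : ∀ x : ℝ,
    ((iteratedDeriv n (fun y : ℝ => Real.exp (-y ^ 2)) x : ℝ) : ℂ)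
      = G n x / (Real.sqrt π : ℂ) := by
  have hπ : ((Real.sqrt π : ℝ) : ℂ) ≠ 0 := by
    exact_mod_cast ne_of_gt (Real.sqrt_pos.2 Real.pi_pos)
  induction n with
  | zero =>
    intro x
    rw [iteratedDeriv_zero, Gzero, mul_comm, mul_div_assoc, div_self hπ, mul_one]
    rw [← Complex.ofReal_pow, ← Complex.ofReal_neg, Complex.ofReal_exp]
  | succ n ih =>
    intro x
    have hG : HasDerivAt (fun x => G n x / (Real.sqrt π : ℂ)) (G (n+1) x / (Real.sqrt π : ℂ)) x :=
      (Gderiv n x).div_const _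
    have hfun : (fun x : ℝ => ((iteratedDeriv n (fun y : ℝ => Real.exp (-y ^ 2)) x : ℝ) : ℂ))
        = fun x => G n x / (Real.sqrt π : ℂ) := funext ih
    have hG' : HasDerivAt (fun x : ℝ =>
        ((iteratedDeriv n (fun y : ℝ => Real.exp (-y ^ 2)) x : ℝ) : ℂ))
        (G (n+1) x / (Real.sqrt π : ℂ)) x := hfun ▸ hG
    -- real derivative
    have hre : HasDerivAt (iteratedDeriv n (fun y : ℝ => Real.exp (-y ^ 2)))
        ((G (n+1) x / (Real.sqrt π : ℂ)).re) x := by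
      have := Complex.reCLM.hasFDerivAt.comp_hasDerivAt x hG'
      exact this
    have hcast : HasDerivAt (fun x : ℝ =>
        ((iteratedDeriv n (fun y : ℝ => Real.exp (-y ^ 2)) x : ℝ) : ℂ))
        (((G (n+1) x / (Real.sqrt π : ℂ)).re : ℝ) : ℂ) x :=
      Complex.ofRealCLM.hasFDerivAt.comp_hasDerivAt x hre
    have huniq : (((G (n+1) x / (Real.sqrt π : ℂ)).re : ℝ) : ℂ) = G (n+1) x / (Real.sqrt π : ℂ) :=
      hcast.unique hG'
    rw [iteratedDeriv_succ, hre.deriv, huniq]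

lemma rexp_tsum (a : ℝ) : ∑' n : ℕ, a ^ n / n.factorial = Real.exp a := by
  rw [Real.exp_eq_exp_ℝ, NormedSpace.exp_eq_tsum_div]

lemma cexp_tsum (a : ℂ) : ∑' n : ℕ, a ^ n / n.factorial = Complex.exp a := by
  rw [Complex.exp_eq_exp_ℂ, NormedSpace.exp_eq_tsum_div]

section main
variable {t x y : ℝ}

lemma sumint (ht : |t| < 1) :
    ∑' n : ℕ, ((t:ℂ) ^ n / (2 ^ n * n.factorial)) * (G n x * G n y)
      = ∫ p : ℝ × ℝ, Complex.exp (-2 * t * p.1 * p.2) *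
          (Complex.exp (-(p.1:ℂ) ^ 2 + 2 * I * p.1 * x) *
           Complex.exp (-(p.2:ℂ) ^ 2 + 2 * I * p.2 * y)) ∂(volume.prod volume) := by
  have h1t : (0:ℝ) < 1 - |t| := by linarith
  set b : ℝ := 1 - |t| with hbdef
  set c : ℕ → ℂ := fun n => (t:ℂ) ^ n / (2 ^ n * n.factorial) with hc
  set f : ℕ → ℝ × ℝ → ℂ := fun n p =>
    (c n * ((2 * I * p.1) ^ n * Complex.exp (-(p.1:ℂ) ^ 2 + 2 * I * p.1 * x))) *
      ((2 * I * p.2) ^ n * Complex.exp (-(p.2:ℂ) ^ 2 + 2 * I * p.2 * y)) with hf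
  have hterm : ∀ n, c n * (G n x * G n y) = ∫ p : ℝ × ℝ, f n p ∂(volume.prod volume) := by
    intro n
    rw [hf]
    rw [integral_prod_mul (μ := volume) (ν := volume)
      (f := fun s : ℝ => c n * ((2 * I * s) ^ n * Complex.exp (-(s:ℂ) ^ 2 + 2 * I * s * x)))
      (g := fun u : ℝ => (2 * I * u) ^ n * Complex.exp (-(u:ℂ) ^ 2 + 2 * I * u * y))]
    rw [MeasureTheory.integral_const_mul]
    rw [G, G]; ring
  have hmeas : ∀ n, AEStronglyMeasurable (f n) (volume.prod volume) := by
    intro n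
    exact Continuous.aestronglyMeasurable (by fun_prop)
  have hnorm : ∀ n p, ‖f n p‖ = (2 * |t| * |p.1| * |p.2|) ^ n / n.factorial *
      (Real.exp (-p.1 ^ 2) * Real.exp (-p.2 ^ 2)) := by
    intro n p
    rw [hf]
    simp only [norm_mul, norm_pow, normA, normE]
    have hcn : ‖c n‖ = |t| ^ n / (2 ^ n * n.factorial) := by
      rw [hc]
      simp [Complex.norm_natCast, Complex.norm_real, Real.norm_eq_abs]
    rw [hcn]
    have h2 : (2 * |t| * |p.1| * |p.2|) ^ n = |t| ^ n * (2 * |p.1|) ^ n * (2 * |p.2|) ^ n / 2 ^ n := by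
      rw [mul_pow, mul_pow, mul_pow, mul_pow]; field_simp; ring
    rw [h2]
    field_simp
    simp only [Complex.norm_two, Complex.norm_I, Complex.norm_real, Real.norm_eq_abs, one_pow, mul_one]
  have hfin : ∑' n, ∫⁻ p, ‖f n p‖₊ ∂(volume.prod volume) ≠ ⊤ := by
    rw [← lintegral_tsum (f := fun n p => (‖f n p‖₊ : ℝ≥0∞)) (fun n => (hmeas n).enorm)]
    have hpt : ∀ p : ℝ × ℝ, ∑' n, (‖f n p‖₊ : ℝ≥0∞)
        = ENNReal.ofReal (Real.exp (2 * |t| * |p.1| * |p.2|) *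
            (Real.exp (-p.1 ^ 2) * Real.exp (-p.2 ^ 2))) := by
      intro p
      have hsummable : Summable (fun n : ℕ => (2 * |t| * |p.1| * |p.2|) ^ n / n.factorial *
          (Real.exp (-p.1 ^ 2) * Real.exp (-p.2 ^ 2))) :=
        (Real.summable_pow_div_factorial _).mul_right _
      calc ∑' n, (‖f n p‖₊ : ℝ≥0∞)
          = ∑' n, ENNReal.ofReal ((2 * |t| * |p.1| * |p.2|) ^ n / n.factorial *
              (Real.exp (-p.1 ^ 2) * Real.exp (-p.2 ^ 2))) := by
            congr 1; funext n
            rw [← enorm_eq_nnnorm, ← ofReal_norm, hnorm n p]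
        _ = ENNReal.ofReal (∑' n, (2 * |t| * |p.1| * |p.2|) ^ n / n.factorial *
              (Real.exp (-p.1 ^ 2) * Real.exp (-p.2 ^ 2))) := by
            rw [ENNReal.ofReal_tsum_of_nonneg (fun n => by positivity) hsummable]
        _ = ENNReal.ofReal (Real.exp (2 * |t| * |p.1| * |p.2|) *
              (Real.exp (-p.1 ^ 2) * Real.exp (-p.2 ^ 2))) := by
            rw [tsum_mul_right, rexp_tsum]
    have hM : Integrable (fun p : ℝ × ℝ =>
        Real.exp (-b * p.1 ^ 2) * Real.exp (-b * p.2 ^ 2)) (volume.prod volume) :=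
      (integrable_exp_neg_mul_sq h1t).mul_prod (integrable_exp_neg_mul_sq h1t)
    have hle : ∀ p : ℝ × ℝ, Real.exp (2 * |t| * |p.1| * |p.2|) *
        (Real.exp (-p.1 ^ 2) * Real.exp (-p.2 ^ 2))
        ≤ Real.exp (-b * p.1 ^ 2) * Real.exp (-b * p.2 ^ 2) := by
      intro p
      rw [← Real.exp_add, ← Real.exp_add, ← Real.exp_add, hbdef]
      apply Real.exp_le_exp.2
      nlinarith [abs_nonneg t, _root_.sq_abs p.1, _root_.sq_abs p.2,
        mul_le_mul_of_nonneg_right ht.le (sq_nonneg (|p.1| - |p.2|)),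
        mul_nonneg (mul_nonneg (abs_nonneg t) (abs_nonneg p.1)) (abs_nonneg p.2)]
    have hMfin : ∫⁻ p, ENNReal.ofReal (Real.exp (-b * p.1 ^ 2) *
        Real.exp (-b * p.2 ^ 2)) ∂(volume.prod volume) ≠ ⊤ := by
      have heq : ∀ p : ℝ × ℝ, ENNReal.ofReal (Real.exp (-b * p.1 ^ 2) * Real.exp (-b * p.2 ^ 2))
          = (‖Real.exp (-b * p.1 ^ 2) * Real.exp (-b * p.2 ^ 2)‖₊ : ℝ≥0∞) := by
        intro p
        rw [← enorm_eq_nnnorm, ← ofReal_norm, Real.norm_eq_abs, _root_.abs_of_nonneg (by positivity)]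
      simp_rw [heq]
      exact hM.2.ne
    refine ne_top_of_le_ne_top hMfin (lintegral_mono fun p => ?_)
    dsimp only
    rw [hpt p]
    exact ENNReal.ofReal_le_ofReal (hle p)
  rw [tsum_congr hterm, ← integral_tsum hmeas hfin]
  congr 1; funext p
  have hptw : ∀ n : ℕ, f n p = (-2 * (t:ℂ) * p.1 * p.2) ^ n / n.factorial *
      (Complex.exp (-(p.1:ℂ) ^ 2 + 2 * I * p.1 * x) *
       Complex.exp (-(p.2:ℂ) ^ 2 + 2 * I * p.2 * y)) := by
    intro n
    have h4 : (t:ℂ) ^ n * ((2 * I * p.1) ^ n * (2 * I * p.2) ^ n)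
        = (-2 * (t:ℂ) * p.1 * p.2) ^ n * 2 ^ n := by
      rw [← mul_pow, ← mul_pow, ← mul_pow]
      congr 1
      linear_combination (4 * (t:ℂ) * p.1 * p.2) * Complex.I_sq
    have key : c n * (2 * I * p.1) ^ n * (2 * I * p.2) ^ n
        = (-2 * (t:ℂ) * p.1 * p.2) ^ n / n.factorial := by
      rw [hc]
      rw [div_mul_eq_mul_div, div_mul_eq_mul_div, mul_assoc, h4]
      rw [mul_comm ((2:ℂ) ^ n) (n.factorial : ℂ)]
      have h5 : ((n.factorial : ℂ)) ≠ 0 := Nat.cast_ne_zero.2 n.factorial_ne_zero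
      field_simp
    calc f n p = (c n * (2 * I * p.1) ^ n * (2 * I * p.2) ^ n) *
          (Complex.exp (-(p.1:ℂ) ^ 2 + 2 * I * p.1 * x) *
           Complex.exp (-(p.2:ℂ) ^ 2 + 2 * I * p.2 * y)) := by rw [hf]; ring
      _ = _ := by rw [key]
  rw [tsum_congr hptw, tsum_mul_right, cexp_tsum]

open Real in
lemma inteval (ht : |t| < 1) :
    (∫ p : ℝ × ℝ, Complex.exp (-2 * t * p.1 * p.2) *
        (Complex.exp (-(p.1:ℂ) ^ 2 + 2 * I * p.1 * x) *
         Complex.exp (-(p.2:ℂ) ^ 2 + 2 * I * p.2 * y)) ∂(volume.prod volume))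
      = (Real.sqrt π : ℂ) * (Real.sqrt (π / (1 - t ^ 2)) : ℂ) *
        Complex.exp (-(y:ℂ) ^ 2 - ((x:ℂ) - t * y) ^ 2 / (1 - (t:ℂ) ^ 2)) := by
  have h1t : (0:ℝ) < 1 - |t| := by linarith
  have h1t2 : (0:ℝ) < 1 - t ^ 2 := by nlinarith [_root_.sq_abs t, abs_nonneg t]
  have hbC : ((t:ℂ) ^ 2 - 1).re < 0 := by
    have : ((t:ℂ) ^ 2 - 1) = ((t ^ 2 - 1 : ℝ) : ℂ) := by push_cast; ring
    rw [this, Complex.ofReal_re]; linarith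
  have hne : (1 - (t:ℂ) ^ 2) ≠ 0 := by
    have : (1 - (t:ℂ) ^ 2) = ((1 - t ^ 2 : ℝ) : ℂ) := by push_cast; ring
    rw [this]
    exact_mod_cast h1t2.ne'
  -- integrability
  have hInt : Integrable (fun p : ℝ × ℝ => Complex.exp (-2 * t * p.1 * p.2) *
      (Complex.exp (-(p.1:ℂ) ^ 2 + 2 * I * p.1 * x) *
       Complex.exp (-(p.2:ℂ) ^ 2 + 2 * I * p.2 * y))) (volume.prod volume) := by
    have hM : Integrable (fun p : ℝ × ℝ =>
        Real.exp (-(1 - |t|) * p.1 ^ 2) * Real.exp (-(1 - |t|) * p.2 ^ 2)) (volume.prod volume) :=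
      (integrable_exp_neg_mul_sq h1t).mul_prod (integrable_exp_neg_mul_sq h1t)
    refine hM.mono' (Continuous.aestronglyMeasurable (by fun_prop))
      (Filter.Eventually.of_forall fun p => ?_)
    have hcast : (-2 * (t:ℂ) * p.1 * p.2) = ((-2 * t * p.1 * p.2 : ℝ) : ℂ) := by push_cast; ring
    rw [norm_mul, norm_mul, hcast, normE, normE]
    rw [Complex.norm_exp, Complex.ofReal_re]
    rw [← Real.exp_add, ← Real.exp_add, ← Real.exp_add]
    apply Real.exp_le_exp.2
    have e1 : -(t * p.1 * p.2) ≤ |t| * |p.1| * |p.2| := by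
      rw [← abs_mul, ← abs_mul]; exact neg_le_abs _
    have e2 : 2 * (|t| * |p.1| * |p.2|) ≤ |t| * p.1 ^ 2 + |t| * p.2 ^ 2 := by
      nlinarith [sq_nonneg (|p.1| - |p.2|), abs_nonneg t, _root_.sq_abs p.1, _root_.sq_abs p.2]
    linarith [e1, e2]
  rw [MeasureTheory.integral_prod _ hInt]
  -- inner integral over the second variable
  have hinner : ∀ s : ℝ, (∫ u : ℝ, Complex.exp (-2 * t * s * u) *
      (Complex.exp (-(s:ℂ) ^ 2 + 2 * I * s * x) * Complex.exp (-(u:ℂ) ^ 2 + 2 * I * u * y)))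
      = Complex.exp (-(s:ℂ) ^ 2 + 2 * I * s * x) *
        ((Real.sqrt π : ℂ) * Complex.exp (-(y:ℂ) ^ 2 + (t:ℂ) ^ 2 * s ^ 2 - 2 * I * t * s * y)) := by
    intro s
    have e1 : ∀ u : ℝ, Complex.exp (-2 * t * s * u) *
        (Complex.exp (-(s:ℂ) ^ 2 + 2 * I * s * x) * Complex.exp (-(u:ℂ) ^ 2 + 2 * I * u * y))
        = Complex.exp (-(s:ℂ) ^ 2 + 2 * I * s * x) *
          Complex.exp ((-1 : ℂ) * u ^ 2 + (2 * I * y - 2 * t * s) * u + 0) := by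
      intro u
      rw [mul_left_comm, ← Complex.exp_add]
      congr 2
      ring
    simp_rw [e1]
    rw [MeasureTheory.integral_const_mul]
    rw [integral_cexp_quadratic (by norm_num : ((-1:ℂ)).re < 0)]
    congr 1
    rw [show ((π:ℂ) / - -1) = ((π:ℝ):ℂ) by norm_num, cpow_half π Real.pi_pos.le]
    congr 2
    have hI := Complex.I_sq
    have hc1 : (2 * I * (y:ℂ) - 2 * (t:ℂ) * (s:ℂ)) ^ 2
        = -4 * (y:ℂ) ^ 2 + 4 * (t:ℂ) ^ 2 * (s:ℂ) ^ 2 - 8 * I * t * s * y := by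
      linear_combination (4 * (y:ℂ) ^ 2) * hI
    rw [hc1]
    ring
  simp_rw [hinner]
  -- outer integral
  have e2 : ∀ s : ℝ, Complex.exp (-(s:ℂ) ^ 2 + 2 * I * s * x) *
      ((Real.sqrt π : ℂ) * Complex.exp (-(y:ℂ) ^ 2 + (t:ℂ) ^ 2 * s ^ 2 - 2 * I * t * s * y))
      = (Real.sqrt π : ℂ) *
        Complex.exp (((t:ℂ) ^ 2 - 1) * s ^ 2 + (2 * I * x - 2 * I * t * y) * s + (-(y:ℂ) ^ 2)) := by
    intro s
    rw [mul_left_comm, ← Complex.exp_add]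
    congr 2
    ring
  simp_rw [e2]
  rw [MeasureTheory.integral_const_mul]
  rw [integral_cexp_quadratic hbC]
  have hpi : ((π:ℂ) / -((t:ℂ) ^ 2 - 1)) = ((π / (1 - t ^ 2) : ℝ) : ℂ) := by push_cast; ring
  rw [hpi, cpow_half _ (by positivity)]
  rw [← mul_assoc]
  congr 2
  have hI := Complex.I_sq
  have hb2 : ((t:ℂ) ^ 2 - 1) ≠ 0 := fun h => hne (by linear_combination -h)
  have hc2 : (2 * I * (x:ℂ) - 2 * I * (t:ℂ) * (y:ℂ)) ^ 2 = -4 * ((x:ℂ) - t * y) ^ 2 := by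
    linear_combination (4 * ((x:ℂ) - t * y) ^ 2) * hI
  rw [hc2]
  field_simp
  ring

open Real in
lemma physHermite_eq (n : ℕ) (z : ℝ) :
    ((physHermite n z : ℝ) : ℂ)
      = (-1) ^ n * Complex.exp ((z:ℂ) ^ 2) * (G n z / (Real.sqrt π : ℂ)) := by
  rw [physHermite, Complex.ofReal_mul, Complex.ofReal_mul, iter_eq n z]
  push_cast
  ring

open Real in
theorem stmt11 (t x y : ℝ) (ht : |t| < 1) :
    (∑' n : ℕ, t ^ n * physHermite n x * physHermite n y / (2 ^ n * Nat.factorial n)) =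
      (1 / Real.sqrt (1 - t ^ 2)) *
        Real.exp ((-t ^ 2 * (x ^ 2 + y ^ 2) + 2 * t * x * y) / (1 - t ^ 2)) := by
  have h1t2 : (0:ℝ) < 1 - t ^ 2 := by nlinarith [_root_.sq_abs t, abs_nonneg t]
  have hne : (1 - (t:ℂ) ^ 2) ≠ 0 := by
    have h : (1 - (t:ℂ) ^ 2) = ((1 - t ^ 2 : ℝ) : ℂ) := by push_cast; ring
    rw [h]; exact_mod_cast h1t2.ne'
  have hππ : ((Real.sqrt π : ℝ) : ℂ) * ((Real.sqrt π : ℝ) : ℂ) = ((π : ℝ) : ℂ) := by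
    rw [← Complex.ofReal_mul, Real.mul_self_sqrt Real.pi_pos.le]
  apply Complex.ofReal_injective
  rw [Complex.ofReal_tsum]
  have hterm : ∀ n : ℕ,
      ((t ^ n * physHermite n x * physHermite n y / (2 ^ n * Nat.factorial n) : ℝ) : ℂ)
      = (Complex.exp ((x:ℂ) ^ 2) * Complex.exp ((y:ℂ) ^ 2) / ((π:ℝ):ℂ)) *
          (((t:ℂ) ^ n / (2 ^ n * n.factorial)) * (G n x * G n y)) := by
    intro n
    push_cast
    rw [physHermite_eq, physHermite_eq]
    have hsπ : ((Real.sqrt π : ℝ) : ℂ) ≠ 0 := by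
      exact_mod_cast (Real.sqrt_pos.2 Real.pi_pos).ne'
    have hfac : ((n.factorial : ℂ)) ≠ 0 := Nat.cast_ne_zero.2 n.factorial_ne_zero
    have h2n : ((2:ℂ)) ^ n ≠ 0 := pow_ne_zero _ two_ne_zero
    rw [← hππ]
    field_simp
    ring_nf
    rw [mul_comm n 2, pow_mul]
    norm_num
  rw [tsum_congr hterm, tsum_mul_left, sumint ht, inteval ht]
  have hsq : Real.sqrt π * Real.sqrt (π / (1 - t ^ 2)) = π / Real.sqrt (1 - t ^ 2) := by
    rw [← Real.sqrt_mul Real.pi_pos.le,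
      show π * (π / (1 - t ^ 2)) = π ^ 2 / (1 - t ^ 2) by ring,
      Real.sqrt_div (sq_nonneg π), Real.sqrt_sq Real.pi_pos.le]
  have hs1 : (0:ℝ) < Real.sqrt (1 - t ^ 2) := Real.sqrt_pos.2 h1t2
  have hsne : ((Real.sqrt (1 - t ^ 2) : ℝ) : ℂ) ≠ 0 := by exact_mod_cast hs1.ne'
  have hπne : ((π : ℝ) : ℂ) ≠ 0 := by exact_mod_cast Real.pi_pos.ne'
  rw [← Complex.ofReal_mul, hsq]
  have hexp : (Complex.exp ((x:ℂ) ^ 2) * Complex.exp ((y:ℂ) ^ 2)) *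
      Complex.exp (-(y:ℂ) ^ 2 - ((x:ℂ) - t * y) ^ 2 / (1 - (t:ℂ) ^ 2))
      = Complex.exp (((-t ^ 2 * (x ^ 2 + y ^ 2) + 2 * t * x * y) / (1 - t ^ 2) : ℝ)) := by
    rw [← Complex.exp_add, ← Complex.exp_add]
    congr 1
    push_cast
    field_simp
    ring
  calc Complex.exp ((x:ℂ) ^ 2) * Complex.exp ((y:ℂ) ^ 2) / ((π:ℝ):ℂ) *
        (((π / Real.sqrt (1 - t ^ 2) : ℝ) : ℂ) *
          Complex.exp (-(y:ℂ) ^ 2 - ((x:ℂ) - t * y) ^ 2 / (1 - (t:ℂ) ^ 2)))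
      = (1 / ((Real.sqrt (1 - t ^ 2) : ℝ) : ℂ)) *
          ((Complex.exp ((x:ℂ) ^ 2) * Complex.exp ((y:ℂ) ^ 2)) *
            Complex.exp (-(y:ℂ) ^ 2 - ((x:ℂ) - t * y) ^ 2 / (1 - (t:ℂ) ^ 2))) := by
        rw [Complex.ofReal_div]
        field_simp
    _ = ((1 / Real.sqrt (1 - t ^ 2) *
          Real.exp ((-t ^ 2 * (x ^ 2 + y ^ 2) + 2 * t * x * y) / (1 - t ^ 2)) : ℝ) : ℂ) := by
        rw [hexp]
        push_cast [Complex.ofReal_exp]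
        ring

end main
end
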